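/- For λ ∈ (0,1/2)^ℕ, the difference set C(λ) - C(λ) is a finite union of closed intervals if and only if the set {n ∈ ℕ : λ_n < 1/3} is finite. -/

import Mathlib

open Set Pointwise Filter MeasureTheory

noncomputable section

/-- `dseq lam n = λ₁ ⋯ λₙ` (with `lam i` the `i`-th term, `1`-indexed); `dseq lam 0 = 1`. -/
def dseq (lam : ℕ → ℝ) (n : ℕ) : ℝ := ∏ i ∈ Finset.Icc 1 n, lam i

/-- Left endpoint of the interval `I_p` of the central Cantor construction. -/
def leftI (lam : ℕ → ℝ) (p : List Bool) : ℝ :=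
  ∑ i : Fin p.length, if p.get i then dseq lam (i : ℕ) - dseq lam ((i : ℕ) + 1) else 0

/-- The closed interval `I_p` of the central Cantor construction. -/
def Iset (lam : ℕ → ℝ) (p : List Bool) : Set ℝ :=
  Icc (leftI lam p) (leftI lam p + dseq lam p.length)

/-- The `n`-th stage `C_n(λ)` of the central Cantor construction. -/
def CnSet (lam : ℕ → ℝ) (n : ℕ) : Set ℝ :=
  ⋃ p ∈ {p : List Bool | p.length = n}, Iset lam p

/-- The central Cantor set `C(λ)`. -/
def CSet (lam : ℕ → ℝ) : Set ℝ := ⋂ n, CnSet lam n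

/-- `J_t = I_p - I_q` where `t i = p i - q i + 1` (pointwise set difference). -/
def Jset (lam : ℕ → ℝ) (t : List (Fin 3)) : Set ℝ :=
  Iset lam (t.map fun a => decide (a = 2)) - Iset lam (t.map fun a => decide (a = 0))

namespace CCantorAux

/-- Partial sums of the series attached to a `0/1` code `S`. -/
def Esum (lam : ℕ → ℝ) (S : ℕ → Bool) (n : ℕ) : ℝ :=
  ∑ k ∈ Finset.range n, if S k then dseq lam k - dseq lam (k + 1) else 0

variable {lam : ℕ → ℝ} (hlam : ∀ n, 1 ≤ n → lam n ∈ Set.Ioo (0 : ℝ) (1 / 2))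

lemma dseq_zero : dseq lam 0 = 1 := by simp [dseq]

lemma dseq_succ (n : ℕ) : dseq lam (n + 1) = dseq lam n * lam (n + 1) := by
  unfold dseq
  rw [Finset.prod_Icc_succ_top (by omega : 1 ≤ n + 1)]

include hlam

lemma dseq_pos (n : ℕ) : 0 < dseq lam n := by
  induction n with
  | zero => simp [dseq_zero]
  | succ n ih => rw [dseq_succ]; exact mul_pos ih (hlam (n+1) (by omega)).1

lemma dseq_half (n : ℕ) : 2 * dseq lam (n + 1) < dseq lam n := by
  rw [dseq_succ]
  have h1 := (hlam (n+1) (by omega)).2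
  have h2 := dseq_pos hlam n
  nlinarith

lemma dseq_le_pow (n : ℕ) : dseq lam n ≤ (1/2 : ℝ) ^ n := by
  induction n with
  | zero => simp [dseq_zero]
  | succ n ih =>
    have := dseq_half hlam n
    have h2 := dseq_pos hlam (n+1)
    rw [pow_succ]
    nlinarith

lemma dseq_tendsto : Tendsto (dseq lam) atTop (nhds 0) := by
  have h1 : Tendsto (fun n : ℕ => (1/2 : ℝ) ^ n) atTop (nhds 0) :=
    tendsto_pow_atTop_nhds_zero_of_lt_one (by norm_num) (by norm_num)
  exact squeeze_zero (fun n => (dseq_pos hlam n).le) (fun n => dseq_le_pow hlam n) h1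

lemma cseq_pos (n : ℕ) : 0 < dseq lam n - dseq lam (n + 1) := by
  have := dseq_half hlam n
  have := dseq_pos hlam (n+1)
  linarith

lemma cseq_anti {j k : ℕ} (h : j ≤ k) :
    dseq lam k - dseq lam (k+1) ≤ dseq lam j - dseq lam (j+1) := by
  induction k with
  | zero => interval_cases j; rfl
  | succ k ih =>
    rcases Nat.lt_or_ge j (k+1) with h' | h'
    · have := ih (by omega)
      have h1 := dseq_half hlam (k+1)
      have h2 := dseq_half hlam k
      have h3 := dseq_pos hlam (k+2)
      linarith
    · have : j = k + 1 := by omega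
      subst this; rfl

omit hlam in
lemma Esum_succ (S : ℕ → Bool) (n : ℕ) :
    Esum lam S (n+1) = Esum lam S n + (if S n then dseq lam n - dseq lam (n + 1) else 0) := by
  simp [Esum, Finset.sum_range_succ]

omit hlam in
lemma sum_c (n : ℕ) :
    ∑ k ∈ Finset.range n, (dseq lam k - dseq lam (k + 1)) = 1 - dseq lam n := by
  rw [Finset.sum_range_sub' (f := fun k => dseq lam k)]
  simp [dseq]

omit hlam in
lemma leftI_eq (p : List Bool) :
    leftI lam p = Esum lam (fun k => p.getD k false) p.length := by
  unfold leftI Esum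
  rw [← Fin.sum_univ_eq_sum_range
    (fun k => if p.getD k false then dseq lam k - dseq lam (k + 1) else 0) p.length]
  apply Finset.sum_congr rfl
  intro i _
  congr 1
  rw [List.get_eq_getElem, List.getD_eq_getElem _ _ i.isLt]

lemma Esum_le_Esum (S : ℕ → Bool) {n m : ℕ} (h : n ≤ m) :
    Esum lam S n ≤ Esum lam S m ∧ Esum lam S m ≤ Esum lam S n + (dseq lam n - dseq lam m) := by
  induction m with
  | zero => have : n = 0 := by omega
            subst this; exact ⟨le_refl _, by simp⟩
  | succ m ih =>
    rcases Nat.lt_or_ge n (m+1) with h' | h'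
    · obtain ⟨h1, h2⟩ := ih (by omega)
      have hc := cseq_pos hlam m
      rw [Esum_succ]
      constructor
      · split <;> linarith
      · split <;> linarith
    · have : n = m + 1 := by omega
      subst this; exact ⟨le_refl _, by simp⟩

lemma Esum_le_one (S : ℕ → Bool) (n : ℕ) : Esum lam S n ≤ 1 - dseq lam n := by
  have h := (Esum_le_Esum hlam S (Nat.zero_le n)).2
  have h0 : Esum lam S 0 = 0 := by simp [Esum]
  have h1 : dseq lam 0 = 1 := by simp [dseq]
  rw [h0, h1] at h
  linarith

/-- The point of the Cantor set coded by `S`. -/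
def cpt (lam : ℕ → ℝ) (S : ℕ → Bool) : ℝ := ⨆ n, Esum lam S n

lemma cpt_bdd (S : ℕ → Bool) : BddAbove (Set.range (Esum lam S)) := by
  refine ⟨1, ?_⟩
  rintro x ⟨n, rfl⟩
  have h := Esum_le_one hlam S n
  have := dseq_pos hlam n
  linarith

lemma cpt_mem (S : ℕ → Bool) (n : ℕ) :
    Esum lam S n ≤ cpt lam S ∧ cpt lam S ≤ Esum lam S n + dseq lam n := by
  constructor
  · exact le_ciSup (cpt_bdd hlam S) n
  · apply ciSup_le
    intro m
    rcases le_total m n with h | h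
    · have := (Esum_le_Esum hlam S h).1
      have := dseq_pos hlam m
      have := dseq_pos hlam n
      have := (Esum_le_Esum hlam S h).2
      linarith
    · have := (Esum_le_Esum hlam S h).2
      have := dseq_pos hlam m
      linarith

omit hlam in
lemma mem_CnSet_iff {a : ℝ} {n : ℕ} :
    a ∈ CnSet lam n ↔ ∃ S : ℕ → Bool, Esum lam S n ≤ a ∧ a ≤ Esum lam S n + dseq lam n := by
  constructor
  · intro h
    simp only [CnSet, mem_iUnion, mem_setOf_eq] at h
    obtain ⟨p, hp, ha⟩ := h
    rw [Iset, leftI_eq, hp] at ha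
    exact ⟨fun k => p.getD k false, ha.1, ha.2⟩
  · rintro ⟨S, h1, h2⟩
    simp only [CnSet, mem_iUnion, mem_setOf_eq]
    refine ⟨List.ofFn (fun i : Fin n => S i), by simp, ?_⟩
    have hlen : (List.ofFn (fun i : Fin n => S i)).length = n := by simp
    have hE : leftI lam (List.ofFn (fun i : Fin n => S i)) = Esum lam S n := by
      rw [leftI_eq, hlen]
      unfold Esum
      apply Finset.sum_congr rfl
      intro k hk
      have hk' : k < n := Finset.mem_range.mp hk
      congr 1
      simp only []
      rw [List.getD_eq_getElem _ _ (by rw [hlen]; exact hk')]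
      simp
    rw [Iset, hE, hlen]
    exact ⟨h1, h2⟩

lemma cpt_mem_CSet (S : ℕ → Bool) : cpt lam S ∈ CSet lam := by
  rw [CSet, mem_iInter]
  intro n
  exact mem_CnSet_iff.mpr ⟨S, (cpt_mem hlam S n).1, (cpt_mem hlam S n).2⟩

omit hlam in
lemma mem_CSet_iff {a : ℝ} :
    a ∈ CSet lam ↔ ∀ n, ∃ S : ℕ → Bool, Esum lam S n ≤ a ∧ a ≤ Esum lam S n + dseq lam n := by
  simp only [CSet, mem_iInter, mem_CnSet_iff]

/-- The greedy construction: any point within `dseq lam N` of a level-`N` difference of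
partial sums is an actual difference of two points of the Cantor set, provided all the
ratios beyond level `N` are at least `1/3`. -/
lemma greedy {N : ℕ} (h3 : ∀ n, N < n → 1/3 ≤ lam n) (S T : ℕ → Bool) (x : ℝ)
    (hx : |x - (Esum lam S N - Esum lam T N)| ≤ dseq lam N) :
    x ∈ CSet lam - CSet lam := by
  classical
  set D : ℕ → ℝ := fun k => Nat.rec (Esum lam S N - Esum lam T N)
    (fun k Dk => if dseq lam (N+k+1) < x - Dk then Dk + (dseq lam (N+k) - dseq lam (N+k+1))
      else if x - Dk < -(dseq lam (N+k+1)) then Dk - (dseq lam (N+k) - dseq lam (N+k+1))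
      else Dk) k with hD
  have hDsucc : ∀ k, D (k+1) =
      if dseq lam (N+k+1) < x - D k then D k + (dseq lam (N+k) - dseq lam (N+k+1))
      else if x - D k < -(dseq lam (N+k+1)) then D k - (dseq lam (N+k) - dseq lam (N+k+1))
      else D k := fun k => rfl
  set S' : ℕ → Bool := fun n =>
    if n < N then S n else if dseq lam (n+1) < x - D (n - N) then true else false with hS'
  set T' : ℕ → Bool := fun n =>
    if n < N then T n else if x - D (n - N) < -(dseq lam (n+1)) then true else false with hT'
  have key : ∀ k, Esum lam S' (N+k) - Esum lam T' (N+k) = D k ∧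
      |x - D k| ≤ dseq lam (N+k) := by
    intro k
    induction k with
    | zero =>
      have hs : Esum lam S' N = Esum lam S N := by
        unfold Esum
        apply Finset.sum_congr rfl
        intro i hi
        have : i < N := Finset.mem_range.mp hi
        simp [hS', this]
      have ht : Esum lam T' N = Esum lam T N := by
        unfold Esum
        apply Finset.sum_congr rfl
        intro i hi
        have : i < N := Finset.mem_range.mp hi
        simp [hT', this]
      exact ⟨by rw [Nat.add_zero, hs, ht]; rfl, by rw [Nat.add_zero]; exact hx⟩
    | succ k ih =>
      obtain ⟨ih1, ih2⟩ := ih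
      have hm : ¬ (N + k < N) := by omega
      have hmN : N + k - N = k := by omega
      have hS'm : S' (N+k) = (if dseq lam (N+k+1) < x - D k then true else false) := by
        simp [hS', hm, hmN]
      have hT'm : T' (N+k) = (if x - D k < -(dseq lam (N+k+1)) then true else false) := by
        simp [hT', hm, hmN]
      have hNk : N + (k+1) = (N + k) + 1 := by omega
      rw [hNk, Esum_succ, Esum_succ, hDsucc, hS'm, hT'm]
      have hd1 : 0 < dseq lam (N+k+1) := dseq_pos hlam _
      have hc2 : dseq lam (N+k) ≤ 3 * dseq lam (N+k+1) := by
        have h13 := h3 (N+k+1) (by omega)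
        have := dseq_succ (lam := lam) (N+k)
        nlinarith [dseq_pos hlam (N+k)]
      by_cases h1 : dseq lam (N+k+1) < x - D k
      · have h2 : ¬ (x - D k < -(dseq lam (N+k+1))) := by linarith
        simp only [h1, h2, if_true, if_false, ite_true, ite_false]
        norm_num
        constructor
        · linarith
        · rw [abs_le] at ih2 ⊢; constructor <;> linarith [ih2.1, ih2.2]
      · by_cases h2 : x - D k < -(dseq lam (N+k+1))
        · simp only [h1, h2, if_true, if_false, ite_true, ite_false]
          norm_num
          constructor
          · linarith
          · rw [abs_le] at ih2 ⊢; constructor <;> linarith [ih2.1, ih2.2]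
        · simp only [h1, h2, if_false, ite_false]
          norm_num
          constructor
          · linarith
          · rw [abs_le]; constructor <;> linarith
  set a := cpt lam S'
  set b := cpt lam T'
  have habs : ∀ k : ℕ, |x - (a - b)| ≤ 3 * dseq lam (k + N) := by
    intro k
    obtain ⟨k1, k2⟩ := key k
    have ha := cpt_mem hlam S' (N+k)
    have hb := cpt_mem hlam T' (N+k)
    rw [abs_le] at k2 ⊢
    have hkn : k + N = N + k := by omega
    rw [hkn]
    constructor <;> linarith [k2.1, k2.2, ha.1, ha.2, hb.1, hb.2]
  have ht : Tendsto (fun k : ℕ => 3 * dseq lam (k + N)) atTop (nhds 0) := by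
    have := ((dseq_tendsto hlam).comp (tendsto_add_atTop_nat N)).const_mul (3:ℝ)
    simpa using this
  have h0 : |x - (a - b)| ≤ 0 := ge_of_tendsto ht (Filter.Eventually.of_forall habs)
  have hxab : x = a - b := by
    have h1 := abs_nonneg (x - (a-b))
    have h2 : |x - (a - b)| = 0 := le_antisymm h0 h1
    have h3 := abs_eq_zero.mp h2
    linarith [sub_eq_zero.mp h3]
  rw [hxab]
  exact sub_mem_sub (cpt_mem_CSet hlam S') (cpt_mem_CSet hlam T')

/-- The gap near the top of the difference set. -/
lemma gap_lemma (m : ℕ) {x : ℝ} (hx : x ∈ CSet lam - CSet lam) :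
    x ≤ 1 - (dseq lam m - dseq lam (m+1)) ∨ 1 - 2 * dseq lam (m+1) ≤ x := by
  rw [Set.mem_sub] at hx
  obtain ⟨a, ha, b, hb, hab⟩ := hx
  obtain ⟨S, hS1, hS2⟩ := mem_CSet_iff.mp ha (m+1)
  obtain ⟨T, hT1, hT2⟩ := mem_CSet_iff.mp hb (m+1)
  by_cases hall : ∀ j < m+1, S j = true ∧ T j = false
  · right
    have hES : Esum lam S (m+1) = 1 - dseq lam (m+1) := by
      rw [← sum_c (lam := lam) (m+1)]
      apply Finset.sum_congr rfl
      intro k hk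
      rw [if_pos (hall k (Finset.mem_range.mp hk)).1]
    have hET : Esum lam T (m+1) = 0 := by
      apply Finset.sum_eq_zero
      intro k hk
      rw [(hall k (Finset.mem_range.mp hk)).2]
      simp
    rw [hES] at hS1
    rw [hET] at hT2
    linarith
  · left
    push_neg at hall
    obtain ⟨j, hj, hcase⟩ := hall
    have hbound : Esum lam S (m+1) - Esum lam T (m+1) ≤
        ∑ k ∈ Finset.range (m+1),
          ((dseq lam k - dseq lam (k+1)) - (if k = j then dseq lam k - dseq lam (k+1) else 0)) := by
      unfold Esum
      rw [← Finset.sum_sub_distrib]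
      apply Finset.sum_le_sum
      intro k _
      by_cases hkj : k = j
      · subst hkj
        simp only [eq_self_iff_true, if_true]
        by_cases hT : T k = true
        · rw [if_pos hT]
          have := cseq_pos hlam k
          split <;> linarith
        · have hS : S k = false := by
            by_cases hS : S k = true
            · exact absurd (hcase hS) (by simpa using hT)
            · simpa using hS
          rw [if_neg hT, hS]
          simp only [Bool.false_eq_true, if_false]
          linarith
      · rw [if_neg hkj]
        have := cseq_pos hlam k
        split <;> split <;> linarith
    have hsum : ∑ k ∈ Finset.range (m+1),
        ((dseq lam k - dseq lam (k+1)) - (if k = j then dseq lam k - dseq lam (k+1) else 0))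
        = (1 - dseq lam (m+1)) - (dseq lam j - dseq lam (j+1)) := by
      rw [Finset.sum_sub_distrib, sum_c (lam := lam) (m+1),
        Finset.sum_ite_eq' (Finset.range (m+1)) j (fun k => dseq lam k - dseq lam (k+1)),
        if_pos (Finset.mem_range.mpr hj)]
    have hcj : dseq lam m - dseq lam (m+1) ≤ dseq lam j - dseq lam (j+1) :=
      cseq_anti hlam (by omega)
    rw [hsum] at hbound
    linarith

lemma zero_mem_CSet : (0:ℝ) ∈ CSet lam := by
  have h : cpt lam (fun _ => false) = 0 := by
    have : ∀ n, Esum lam (fun _ => false) n = 0 := by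
      intro n; apply Finset.sum_eq_zero; intro k _; simp
    unfold cpt
    simp only [this, ciSup_const]
  have := cpt_mem_CSet hlam (fun _ => false)
  rwa [h] at this

lemma notm_mem_CSet (m : ℕ) : (1 - (dseq lam m - dseq lam (m+1)) : ℝ) ∈ CSet lam := by
  classical
  set S : ℕ → Bool := fun k => decide (k ≠ m) with hS
  have hE : ∀ n, m < n → Esum lam S n = 1 - dseq lam n - (dseq lam m - dseq lam (m+1)) := by
    intro n hn
    have : Esum lam S n = ∑ k ∈ Finset.range n,
        ((dseq lam k - dseq lam (k+1)) - (if k = m then dseq lam k - dseq lam (k+1) else 0)) := by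
      apply Finset.sum_congr rfl
      intro k _
      by_cases hk : k = m
      · subst hk
        have hSk : S k = false := by simp [hS]
        rw [hSk, if_pos rfl]
        simp
      · have hSk : S k = true := by simp [hS, hk]
        rw [hSk, if_neg hk]
        simp
    rw [this, Finset.sum_sub_distrib, sum_c (lam := lam) n,
      Finset.sum_ite_eq' (Finset.range n) m (fun k => dseq lam k - dseq lam (k+1)),
      if_pos (Finset.mem_range.mpr hn)]
  have h : cpt lam S = 1 - (dseq lam m - dseq lam (m+1)) := by
    have h1 : cpt lam S ≤ 1 - (dseq lam m - dseq lam (m+1)) := by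
      have := (cpt_mem hlam S (m+1)).2
      rw [hE (m+1) (by omega)] at this
      linarith
    have h2 : 1 - (dseq lam m - dseq lam (m+1)) ≤ cpt lam S := by
      have hten : Tendsto (fun n : ℕ => 1 - dseq lam (n + (m+1)) - (dseq lam m - dseq lam (m+1)))
          atTop (nhds (1 - (dseq lam m - dseq lam (m+1)))) := by
        have h0 : Tendsto (fun n : ℕ => dseq lam (n + (m+1))) atTop (nhds 0) :=
          (dseq_tendsto hlam).comp (tendsto_add_atTop_nat (m+1))
        have := (h0.const_sub 1).sub_const (dseq lam m - dseq lam (m+1))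
        simpa using this
      apply le_of_tendsto hten
      filter_upwards with n
      rw [← hE (n + (m+1)) (by omega)]
      exact (cpt_mem hlam S (n + (m+1))).1
    linarith
  have := cpt_mem_CSet hlam S
  rwa [h] at this

lemma notm_mem_diff (m : ℕ) : (1 - (dseq lam m - dseq lam (m+1)) : ℝ) ∈ CSet lam - CSet lam := by
  have := sub_mem_sub (notm_mem_CSet hlam m) (zero_mem_CSet hlam)
  simpa using this

end CCantorAux

open CCantorAux in
/-- `C(λ) - C(λ)` is a finite union of closed intervals iff `{n : λₙ < 1/3}` is finite. -/
theorem CSet_sub_CSet_finite_union_iff (lam : ℕ → ℝ)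
    (hlam : ∀ n, 1 ≤ n → lam n ∈ Ioo (0 : ℝ) (1 / 2)) :
    (∃ F : Finset (ℝ × ℝ), CSet lam - CSet lam = ⋃ p ∈ F, Icc p.1 p.2) ↔
      {n : ℕ | 1 ≤ n ∧ lam n < 1 / 3}.Finite := by
  classical
  constructor
  · rintro ⟨F, hF⟩
    by_contra hinf
    have hinf' : {n : ℕ | 1 ≤ n ∧ lam n < 1 / 3}.Infinite := hinf
    obtain ⟨β, hβ1, hβ2⟩ : ∃ β : ℝ, β < 1 ∧ ∀ p ∈ F, p.2 < 1 → p.2 ≤ β := by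
      by_cases hG : (F.filter (fun p : ℝ × ℝ => p.2 < 1)).Nonempty
      · refine ⟨(F.filter (fun p : ℝ × ℝ => p.2 < 1)).sup' hG Prod.snd, ?_, ?_⟩
        · rw [Finset.sup'_lt_iff]
          intro p hp
          exact (Finset.mem_filter.mp hp).2
        · intro p hp hp2
          exact Finset.le_sup' Prod.snd (Finset.mem_filter.mpr ⟨hp, hp2⟩)
      · exact ⟨0, by norm_num,
          fun p hp hp2 => absurd ⟨p, Finset.mem_filter.mpr ⟨hp, hp2⟩⟩ hG⟩
    have hev : ∀ᶠ n in atTop, dseq lam n < 1 - β :=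
      (dseq_tendsto hlam).eventually_lt_const (by linarith)
    obtain ⟨K, hK⟩ := eventually_atTop.mp hev
    obtain ⟨n, hn_mem, hn_gt⟩ := hinf'.exists_gt (K + 1)
    obtain ⟨hn1, hn3⟩ := hn_mem
    set m := n - 1 with hm
    have hmn : n = m + 1 := by omega
    have hdm : dseq lam m < 1 - β := hK m (by omega)
    have hgap : 2 * dseq lam (m+1) < dseq lam m - dseq lam (m+1) := by
      have hsucc : dseq lam (m+1) = dseq lam m * lam (m+1) := dseq_succ m
      have h13 : lam (m+1) < 1/3 := by rw [← hmn]; exact hn3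
      nlinarith [dseq_pos hlam m]
    have hx : (1 - (dseq lam m - dseq lam (m+1))) ∈ CSet lam - CSet lam :=
      notm_mem_diff hlam m
    rw [hF] at hx
    simp only [mem_iUnion, exists_prop] at hx
    obtain ⟨p, hpF, hp⟩ := hx
    rw [mem_Icc] at hp
    have hp2 : 1 ≤ p.2 := by
      by_contra h
      push_neg at h
      have hb := hβ2 p hpF h
      have hd1 := dseq_pos hlam (m+1)
      linarith [hp.2]
    set g := ((1 - (dseq lam m - dseq lam (m+1))) + (1 - 2 * dseq lam (m+1))) / 2 with hg
    have hg_mem : g ∈ Icc p.1 p.2 := by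
      rw [mem_Icc]
      have hd1 := dseq_pos hlam (m+1)
      have hc := cseq_pos hlam m
      exact ⟨by linarith [hp.1], by linarith⟩
    have hgC : g ∈ CSet lam - CSet lam := by
      rw [hF]
      exact mem_biUnion hpF hg_mem
    rcases gap_lemma hlam m hgC with h | h
    · rw [hg] at h; linarith
    · rw [hg] at h; linarith
  · intro hfin
    obtain ⟨N, hN⟩ := hfin.bddAbove
    have h3 : ∀ k, N < k → 1/3 ≤ lam k := by
      intro k hk
      by_contra h
      push_neg at h
      have : k ≤ N := hN ⟨by omega, h⟩
      omega
    set ext : (Fin N → Bool) → ℕ → Bool :=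
      fun f k => if h : k < N then f ⟨k, h⟩ else false with hext
    refine ⟨Finset.image (fun fg : (Fin N → Bool) × (Fin N → Bool) =>
      (Esum lam (ext fg.1) N - Esum lam (ext fg.2) N - dseq lam N,
       Esum lam (ext fg.1) N - Esum lam (ext fg.2) N + dseq lam N)) Finset.univ, ?_⟩
    ext x
    simp only [mem_iUnion, Finset.mem_image, Finset.mem_univ, true_and, exists_prop]
    constructor
    · intro hx
      rw [Set.mem_sub] at hx
      obtain ⟨a, ha, b, hb, hab⟩ := hx
      obtain ⟨S, hS1, hS2⟩ := mem_CSet_iff.mp ha N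
      obtain ⟨T, hT1, hT2⟩ := mem_CSet_iff.mp hb N
      have heS : Esum lam (ext (fun i : Fin N => S i)) N = Esum lam S N := by
        apply Finset.sum_congr rfl
        intro k hk
        have hk' := Finset.mem_range.mp hk
        simp [hext, hk']
      have heT : Esum lam (ext (fun i : Fin N => T i)) N = Esum lam T N := by
        apply Finset.sum_congr rfl
        intro k hk
        have hk' := Finset.mem_range.mp hk
        simp [hext, hk']
      refine ⟨_, ⟨(fun i => S i, fun i => T i), rfl⟩, ?_⟩
      rw [mem_Icc]
      simp only [heS, heT]
      exact ⟨by linarith, by linarith⟩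
    · rintro ⟨q, ⟨fg, rfl⟩, hq⟩
      apply greedy hlam h3 (ext fg.1) (ext fg.2)
      rw [abs_le]
      rw [mem_Icc] at hq
      simp only at hq
      exact ⟨by linarith [hq.1], by linarith [hq.2]⟩
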